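/- Let θ > 0, J ≥ 1 an integer, n ≥ 1, and c₁,…,c_J nonnegative integers summing to n. Define p̃_r = (θ/J)·r!/(θ+n) · Σ_{j=1}^{J} binom(c_j, r) · (θ/J)_{(c_j - r)} / (θ/J)_{(c_j)} for r ≥ 1. Then the sum Σ_{r≥1} ((θ+n)/r) · p̃_r equals -θ·ψ(1 - θ/J) + (θ/J)·Σ_{j=1}^{J} ψ(1 - θ/J - c_j), where ψ is the digamma function, provided θ/J is not a nonnegative integer. -/

import Mathlib

open Finset

noncomputable def risingFactorial (x : ℝ) (u : ℕ) : ℝ :=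
  ∏ j ∈ Finset.range u, (x + j)

noncomputable def genFacCoef (u v : ℕ) (a : ℝ) : ℝ :=
  (1 / (v.factorial : ℝ)) *
    ∑ i ∈ Finset.range (v + 1),
      (-1 : ℝ) ^ i * (v.choose i : ℝ) * risingFactorial (-(i * a)) u

def stirling1 : ℕ → ℕ → ℕ
  | 0, 0 => 1
  | 0, _ + 1 => 0
  | _ + 1, 0 => 0
  | u + 1, v + 1 => u * stirling1 u (v + 1) + stirling1 u v

noncomputable def digamma (x : ℝ) : ℝ := deriv (fun y => Real.log (Real.Gamma y)) x

lemma rf_succ (x : ℝ) (k : ℕ) :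
    risingFactorial x (k + 1) = risingFactorial x k * (x + k) :=
  Finset.prod_range_succ _ _

lemma rf_pos {x : ℝ} (hx : 0 < x) (m : ℕ) : 0 < risingFactorial x m :=
  Finset.prod_pos fun j _ => by positivity

lemma digamma_add_one (x : ℝ) (hx : ∀ m : ℕ, x ≠ -m) :
    digamma (x + 1) = digamma x + 1 / x := by
  have hx0 : x ≠ 0 := by simpa using hx 0
  have hΓd : DifferentiableAt ℝ Real.Gamma x := Real.differentiableAt_Gamma hx
  have hΓ0 : Real.Gamma x ≠ 0 := by
    rw [Ne, Real.Gamma_eq_zero_iff]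
    push_neg
    exact hx
  have hev : (fun y => Real.log (Real.Gamma (y + 1)))
      =ᶠ[nhds x] (fun y => Real.log y + Real.log (Real.Gamma y)) := by
    have h1 : ∀ᶠ y in nhds x, y ≠ 0 := eventually_ne_nhds hx0
    have h2 : ∀ᶠ y in nhds x, Real.Gamma y ≠ 0 :=
      hΓd.continuousAt.eventually_ne hΓ0
    filter_upwards [h1, h2] with y hy1 hy2
    rw [Real.Gamma_add_one hy1, Real.log_mul hy1 hy2]
  have e1 : digamma (x + 1) = deriv (fun y => Real.log (Real.Gamma (y + 1))) x := by
    rw [digamma, ← deriv_comp_add_const (fun y => Real.log (Real.Gamma y)) 1 x]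
  rw [e1, hev.deriv_eq, deriv_fun_add (Real.differentiableAt_log hx0) (hΓd.log hΓ0),
    Real.deriv_log, digamma, one_div]
  ring

lemma digamma_shift (a : ℝ) (ha : 0 < a) (hnp : ∀ m : ℕ, a ≠ m) (m : ℕ) :
    digamma (1 - a - m) = digamma (1 - a) + ∑ k ∈ Finset.range m, 1 / (a + k) := by
  induction m with
  | zero => simp
  | succ m ih =>
    have hx : ∀ k : ℕ, (1 - a - (m + 1 : ℕ) : ℝ) ≠ -k := by
      intro k
      push_cast
      intro h
      have : a = (k : ℝ) - m := by linarith
      rcases le_or_gt (m : ℝ) (k : ℝ) with h' | h'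
      · have hk : m ≤ k := by exact_mod_cast h'
        exact hnp (k - m) (by rw [this]; push_cast [hk]; ring)
      · linarith
    have := digamma_add_one (1 - a - (m + 1 : ℕ)) hx
    have he : (1 - a - (m + 1 : ℕ) : ℝ) + 1 = 1 - a - m := by push_cast; ring
    rw [he] at this
    rw [Finset.sum_range_succ]
    have ham : a + (m : ℝ) ≠ 0 := by positivity
    have h2 : (1 : ℝ) - a - ((m:ℕ) + 1 : ℕ) = -(a + m) := by push_cast; ring
    rw [h2] at this
    have h3 : (1:ℝ) / -(a + m) = -(1 / (a + m)) := by rw [div_neg]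
    rw [h3] at this
    rw [h2]
    linarith

lemma keyS (a : ℝ) (ha : 0 < a) (m : ℕ) :
    ∑ r ∈ Finset.range m, (r.factorial : ℝ) * (m.choose (r + 1) : ℝ) *
        risingFactorial a (m - (r + 1))
      = risingFactorial a m * ∑ k ∈ Finset.range m, 1 / (a + k) := by
  induction m with
  | zero => simp
  | succ m ih =>
    have step1 : ∀ r ∈ Finset.range (m + 1),
        (r.factorial : ℝ) * ((m+1).choose (r + 1) : ℝ) * risingFactorial a (m + 1 - (r + 1))
        = (r.factorial : ℝ) * (m.choose r : ℝ) * risingFactorial a (m - r)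
          + (r.factorial : ℝ) * (m.choose (r+1) : ℝ) * risingFactorial a (m - r) := by
      intro r _
      rw [Nat.choose_succ_succ, Nat.succ_sub_succ]
      push_cast
      ring
    rw [Finset.sum_congr rfl step1, Finset.sum_add_distrib]
    have hA : ∑ r ∈ Finset.range (m + 1),
        (r.factorial : ℝ) * (m.choose r : ℝ) * risingFactorial a (m - r)
        = (∑ r ∈ Finset.range m,
            ((r+1).factorial : ℝ) * (m.choose (r+1) : ℝ) * risingFactorial a (m - (r+1)))
          + risingFactorial a m := by
      rw [Finset.sum_range_succ' (fun r => (r.factorial : ℝ) * (m.choose r : ℝ) *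
        risingFactorial a (m - r)) m]
      simp
    have hB : ∑ r ∈ Finset.range (m + 1),
        (r.factorial : ℝ) * (m.choose (r+1) : ℝ) * risingFactorial a (m - r)
        = (a + m) * (∑ r ∈ Finset.range m,
            (r.factorial : ℝ) * (m.choose (r+1) : ℝ) * risingFactorial a (m - (r+1)))
          - ∑ r ∈ Finset.range m,
            ((r+1).factorial : ℝ) * (m.choose (r+1) : ℝ) * risingFactorial a (m - (r+1)) := by
      rw [Finset.sum_range_succ]
      simp only [Nat.choose_succ_self, Nat.cast_zero, mul_zero, zero_mul, add_zero, mul_zero]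
      rw [Finset.mul_sum, ← Finset.sum_sub_distrib]
      apply Finset.sum_congr rfl
      intro r hr
      have hrm : r + 1 ≤ m := Finset.mem_range.mp hr
      have h1 : m - r = (m - (r+1)) + 1 := by omega
      have h2 : ((m - (r+1) : ℕ) : ℝ) = (m : ℝ) - (r : ℝ) - 1 := by
        push_cast [Nat.cast_sub hrm]
        ring
      rw [h1, rf_succ, h2, Nat.factorial_succ]
      push_cast
      ring
    rw [hA, hB, ih]
    have ham : a + (m : ℝ) ≠ 0 := by positivity
    rw [rf_succ, Finset.sum_range_succ]
    field_simp
    ring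

theorem sum_distinct_estimators_eq_digamma (θ : ℝ) (hθ : 0 < θ) (J : ℕ) (hJ : 1 ≤ J)
    (n : ℕ) (hn : 1 ≤ n) (c : Fin J → ℕ) (hc : ∑ j, c j = n)
    (hnp : ∀ m : ℕ, θ / J ≠ m) :
    (∑' r : ℕ, if 1 ≤ r then
        ((θ + n) / r) *
          ((θ / J) * (r.factorial : ℝ) / (θ + n) *
            ∑ j, ((c j).choose r : ℝ) * risingFactorial (θ / J) (c j - r)
              / risingFactorial (θ / J) (c j))
      else 0)
      = -θ * digamma (1 - θ / J) + (θ / J) * ∑ j, digamma (1 - θ / J - (c j : ℝ)) := by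
  have hJ0 : (0 : ℝ) < J := by exact_mod_cast hJ
  set a : ℝ := θ / J with ha_def
  have ha : 0 < a := div_pos hθ hJ0
  have hθn : θ + (n : ℝ) ≠ 0 := by positivity
  have hcle : ∀ j, c j ≤ n := by
    intro j
    rw [← hc]
    exact Finset.single_le_sum (fun i _ => Nat.zero_le _) (Finset.mem_univ j)
  set F : ℕ → ℝ := fun r => if 1 ≤ r then
      ((θ + n) / r) * (a * (r.factorial : ℝ) / (θ + n) *
        ∑ j, ((c j).choose r : ℝ) * risingFactorial a (c j - r)
          / risingFactorial a (c j)) else 0 with hF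
  have hvanish : ∀ r ∉ Finset.range (n + 1), F r = 0 := by
    intro r hr
    have hnr : n < r := by simpa [Finset.mem_range] using hr
    have : ∀ j : Fin J, ((c j).choose r : ℝ) = 0 := by
      intro j
      rw [Nat.choose_eq_zero_of_lt (lt_of_le_of_lt (hcle j) hnr)]
      simp
    simp [hF, this]
  have htsum : ∑' r : ℕ, F r = ∑ r ∈ Finset.range (n + 1), F r :=
    tsum_eq_sum hvanish
  rw [show (∑' r : ℕ, if 1 ≤ r then
        ((θ + n) / r) *
          ((θ / J) * (r.factorial : ℝ) / (θ + n) *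
            ∑ j, ((c j).choose r : ℝ) * risingFactorial (θ / J) (c j - r)
              / risingFactorial (θ / J) (c j))
      else 0) = ∑' r : ℕ, F r from rfl, htsum]
  rw [Finset.sum_range_succ' F n]
  have hF0 : F 0 = 0 := by simp [hF]
  rw [hF0, add_zero]
  have hFr : ∀ r, F (r + 1) = ∑ j, a * (r.factorial : ℝ) * ((c j).choose (r+1) : ℝ)
      * risingFactorial a (c j - (r+1)) / risingFactorial a (c j) := by
    intro r
    rw [hF]
    simp only [Nat.succ_le_iff, Nat.succ_pos, if_pos, Finset.mul_sum]
    apply Finset.sum_congr rfl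
    intro j _
    have hr1 : ((r : ℝ) + 1) ≠ 0 := by positivity
    have hrf : risingFactorial a (c j) ≠ 0 := (rf_pos ha (c j)).ne'
    have hJne : (J : ℝ) ≠ 0 := hJ0.ne'
    rw [Nat.factorial_succ]
    push_cast
    field_simp
  rw [Finset.sum_congr rfl (fun r _ => hFr r), Finset.sum_comm]
  have hperj : ∀ j : Fin J, ∑ r ∈ Finset.range n,
      a * (r.factorial : ℝ) * ((c j).choose (r+1) : ℝ)
        * risingFactorial a (c j - (r+1)) / risingFactorial a (c j)
      = a * ∑ k ∈ Finset.range (c j), 1 / (a + k) := by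
    intro j
    have hrfne : risingFactorial a (c j) ≠ 0 := (rf_pos ha _).ne'
    have hsub : Finset.range (c j) ⊆ Finset.range n := by
      apply Finset.range_subset_range.mpr (hcle j)
    have hext : ∑ r ∈ Finset.range n,
        (r.factorial : ℝ) * ((c j).choose (r+1) : ℝ) * risingFactorial a (c j - (r+1))
        = ∑ r ∈ Finset.range (c j),
        (r.factorial : ℝ) * ((c j).choose (r+1) : ℝ) * risingFactorial a (c j - (r+1)) := by
      refine (Finset.sum_subset hsub ?_).symm
      intro r _ hr
      have : c j < r + 1 := by
        have := Finset.mem_range.not.mp hr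
        omega
      rw [Nat.choose_eq_zero_of_lt this]
      simp
    have : ∑ r ∈ Finset.range n,
        a * (r.factorial : ℝ) * ((c j).choose (r+1) : ℝ)
          * risingFactorial a (c j - (r+1)) / risingFactorial a (c j)
        = a / risingFactorial a (c j) * ∑ r ∈ Finset.range n,
          (r.factorial : ℝ) * ((c j).choose (r+1) : ℝ) * risingFactorial a (c j - (r+1)) := by
      rw [Finset.mul_sum]
      apply Finset.sum_congr rfl
      intro r _
      field_simp
    rw [this, hext, keyS a ha (c j)]
    field_simp
  rw [Finset.sum_congr rfl (fun j _ => hperj j)]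
  have hdig : ∀ j : Fin J, digamma (1 - a - (c j : ℝ))
      = digamma (1 - a) + ∑ k ∈ Finset.range (c j), 1 / (a + k) :=
    fun j => digamma_shift a ha hnp (c j)
  rw [Finset.sum_congr rfl (fun j _ => hdig j), Finset.sum_add_distrib]
  rw [Finset.sum_const, Finset.card_univ, Fintype.card_fin, nsmul_eq_mul]
  have haJ : a * J = θ := by
    rw [ha_def]
    field_simp
  rw [mul_add, ← mul_assoc, haJ, Finset.mul_sum]
  ring
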